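/- The Laplace mechanism M(x) = f(x) + Y, where Y ~ Lap(0, Δf/ε), satisfies ε-differential privacy: for any measurable set S ⊆ ℝ and any x, x' with |f(x) − f(x')| ≤ Δf, Pr[M(x) ∈ S] ≤ e^ε · Pr[M(x') ∈ S]. -/

import Mathlib

open MeasureTheory Real
open scoped ENNReal

theorem laplace_mechanism_dp
    {X : Type*} (f : X → ℝ) (ε Δf : ℝ) (hε : 0 < ε) (hΔf : 0 < Δf)
    (lap : Measure ℝ)
    (hlap : lap = volume.withDensity fun y : ℝ =>
      ENNReal.ofReal ((1 / (2 * (Δf / ε))) * Real.exp (-|y| / (Δf / ε))))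
    (M : X → Measure ℝ)
    (hM : ∀ x, M x = lap.map fun y => f x + y)
    (x x' : X) (hadj : |f x - f x'| ≤ Δf)
    (S : Set ℝ) (hS : MeasurableSet S) :
    M x S ≤ ENNReal.ofReal (Real.exp ε) * M x' S := by
  set b : ℝ := Δf / ε with hb_def
  have hb : 0 < b := div_pos hΔf hε
  set g : ℝ → ℝ≥0∞ := fun y => ENNReal.ofReal ((1 / (2 * b)) * Real.exp (-|y| / b))
    with hg_def
  have hgmeas : Measurable g := by
    apply ENNReal.measurable_ofReal.comp
    fun_prop
  -- Compute M z S for any z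
  have key : ∀ z : X, M z S = ∫⁻ w, S.indicator (fun w => g (w - f z)) w := by
    intro z
    rw [hM z, hlap]
    rw [Measure.map_apply (by fun_prop) hS]
    rw [withDensity_apply _ (hS.preimage (by fun_prop))]
    rw [← lintegral_indicator (hS.preimage (by fun_prop)) g]
    have : ∀ y : ℝ, ((fun y => f z + y) ⁻¹' S).indicator g y
        = S.indicator (fun w => g (w - f z)) (f z + y) := by
      intro y
      by_cases h : f z + y ∈ S
      · rw [Set.indicator_of_mem h, Set.indicator_of_mem (by simpa using h)]
        simp
      · rw [Set.indicator_of_notMem h, Set.indicator_of_notMem (by simpa using h)]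
    simp_rw [this]
    exact lintegral_add_left_eq_self (S.indicator (fun w => g (w - f z))) (f z)
  rw [key x, key x']
  rw [← lintegral_const_mul _ (by
    exact (hgmeas.comp (by fun_prop)).indicator hS)]
  apply lintegral_mono
  intro w
  by_cases h : w ∈ S
  · simp only [Set.indicator_of_mem h]
    rw [hg_def]
    rw [← ENNReal.ofReal_mul (Real.exp_pos ε).le]
    apply ENNReal.ofReal_le_ofReal
    have h1 : |w - f x'| ≤ |w - f x| + Δf := by
      calc |w - f x'| = |(w - f x) + (f x - f x')| := by ring_nf
        _ ≤ |w - f x| + |f x - f x'| := abs_add_le _ _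
        _ ≤ |w - f x| + Δf := by linarith
    have hεb : ε * b = Δf := by
      rw [hb_def]; field_simp
    have h2 : Real.exp (-|w - f x| / b) ≤ Real.exp ε * Real.exp (-|w - f x'| / b) := by
      rw [← Real.exp_add]
      apply Real.exp_le_exp.mpr
      have hε' : ε = Δf / b := by rw [hb_def]; field_simp
      rw [hε', ← add_div]
      gcongr
      linarith
    have hpos : (0:ℝ) ≤ 1 / (2 * b) := by positivity
    calc 1 / (2 * b) * Real.exp (-|w - f x| / b)
        ≤ 1 / (2 * b) * (Real.exp ε * Real.exp (-|w - f x'| / b)) :=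
          mul_le_mul_of_nonneg_left h2 hpos
      _ = Real.exp ε * (1 / (2 * b) * Real.exp (-|w - f x'| / b)) := by ring
  · simp only [Set.indicator_of_notMem h, mul_zero, le_refl]
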